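/- arXiv:1602.05343 — 2 statements merged into one kernel-verified Lean document; each statement's English description precedes it below -/
import Mathlib

section
/- For every real number x and every integer n ≥ 0, (n+1) · U_n(x) = Σ_{l=0}^{n} T_l(x) · U_{n-l}(x). -/
/-- `D = 1 - 2x·t + t²` as a formal power series in `t` over `ℝ`. -/
noncomputable def Dser (x : ℝ) : PowerSeries ℝ :=
  1 - PowerSeries.C (2 * x) * PowerSeries.X + PowerSeries.X ^ 2

/-- The Chebyshev polynomial of the first kind `T_n(x)`,
the `n`-th coefficient of `(1-t²)·D⁻¹`. -/
noncomputable def chebT (x : ℝ) (n : ℕ) : ℝ :=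
  PowerSeries.coeff n ((1 - PowerSeries.X ^ 2) * (Dser x)⁻¹)

/-- The Chebyshev polynomial of the second kind `U_n(x)`,
the `n`-th coefficient of `D⁻¹`. -/
noncomputable def chebU (x : ℝ) (n : ℕ) : ℝ :=
  PowerSeries.coeff n (Dser x)⁻¹

open PowerSeries

lemma key (x : ℝ) :
    d⁄dX ℝ (X * (Dser x)⁻¹) = (1 - X ^ 2) * (Dser x)⁻¹ * (Dser x)⁻¹ := by
  set D := Dser x with hDdef
  have hc : constantCoeff D = 1 := by
    simp [hDdef, Dser, map_sub, map_add, map_pow]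
  have hD0 : D ≠ 0 := by
    intro h; rw [h] at hc; simp at hc
  have hD : D * D⁻¹ = 1 := PowerSeries.mul_inv_cancel _ (by rw [hc]; norm_num)
  have hdD : d⁄dX ℝ D = -(PowerSeries.C (2 * x)) + 2 * X := by
    rw [hDdef]
    unfold Dser
    rw [map_add, map_sub, Derivation.leibniz, derivative_X, derivative_C]
    simp [pow_two, Derivation.leibniz, derivative_X]
    ring
  have hdf : D * (d⁄dX ℝ (D⁻¹)) = -((d⁄dX ℝ D) * D⁻¹) := by
    have h0 : d⁄dX ℝ (D * D⁻¹) = 0 := by rw [hD]; simpa using (d⁄dX ℝ).map_one_eq_zero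
    rw [Derivation.leibniz] at h0
    simp only [smul_eq_mul] at h0
    linear_combination h0
  apply mul_left_cancel₀ hD0
  rw [Derivation.leibniz, derivative_X]
  simp only [smul_eq_mul, mul_one]
  calc D * (X * d⁄dX ℝ D⁻¹ + D⁻¹)
      = X * (D * d⁄dX ℝ D⁻¹) + D * D⁻¹ := by ring
    _ = X * (-((d⁄dX ℝ D) * D⁻¹)) + 1 := by rw [hdf, hD]
    _ = ((1 - X ^ 2) - D) * D⁻¹ + 1 := by
        rw [hdD, hDdef]; unfold Dser; ring
    _ = (1 - X ^ 2) * D⁻¹ - D * D⁻¹ + 1 := by ring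
    _ = (1 - X ^ 2) * D⁻¹ := by rw [hD]; ring
    _ = (1 - X ^ 2) * (D * D⁻¹) * D⁻¹ := by rw [hD]; ring
    _ = D * ((1 - X ^ 2) * D⁻¹ * D⁻¹) := by ring

/-- `(n+1) U_n(x) = Σ_{l=0}^n T_l(x) U_{n-l}(x)`. -/
theorem stmt11 (x : ℝ) (n : ℕ) :
    ((n : ℝ) + 1) * chebU x n = ∑ l ∈ Finset.range (n + 1), chebT x l * chebU x (n - l) := by
  have h := congrArg (PowerSeries.coeff n) (key x)
  rw [coeff_derivative, coeff_succ_X_mul, PowerSeries.coeff_mul,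
    Finset.Nat.sum_antidiagonal_eq_sum_range_succ_mk] at h
  push_cast at h
  unfold chebT chebU
  rw [mul_comm ((n : ℝ) + 1)]
  exact h
end

section
/- For every real number x and every integer n ≥ 0, the n-th coefficient of the formal power series (1 - t²)·(D⁻¹)² equals (n+1) · U_n(x). -/
open PowerSeries in
lemma Dser_const (x : ℝ) : constantCoeff (Dser x) = 1 := by
  simp [Dser, pow_two]

open PowerSeries in
lemma deriv_key (x : ℝ) :
    d⁄dX ℝ (X * (Dser x)⁻¹) = (1 - X ^ 2) * (Dser x)⁻¹ ^ 2 := by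
  have hmul : Dser x * (Dser x)⁻¹ = 1 :=
    PowerSeries.mul_inv_cancel _ (by rw [Dser_const x]; norm_num)
  have hD : d⁄dX ℝ (Dser x) = - C (2 * x) + 2 * X := by
    simp [Dser, pow_two, Derivation.leibniz]
    ring
  have h1 : d⁄dX ℝ (X * (Dser x)⁻¹) =
      X * (-(Dser x)⁻¹ ^ 2 * d⁄dX ℝ (Dser x)) + (Dser x)⁻¹ := by
    rw [Derivation.leibniz]
    simp [smul_eq_mul]
  rw [h1, hD]
  have h2 : (Dser x)⁻¹ = Dser x * (Dser x)⁻¹ ^ 2 := by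
    rw [pow_two, ← mul_assoc, hmul, one_mul]
  nth_rewrite 2 [h2]
  have h3 : Dser x - X * (- C (2 * x) + 2 * X) = 1 - X ^ 2 := by
    simp [Dser]; ring
  calc X * (-(Dser x)⁻¹ ^ 2 * (-C (2 * x) + 2 * X)) + Dser x * (Dser x)⁻¹ ^ 2
      = (Dser x - X * (-C (2 * x) + 2 * X)) * (Dser x)⁻¹ ^ 2 := by ring
    _ = (1 - X ^ 2) * (Dser x)⁻¹ ^ 2 := by rw [h3]

/-- the `n`-th coefficient of `(1 - t²)·(D⁻¹)²` is `(n+1) U_n(x)`. -/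
theorem stmt12 (x : ℝ) (n : ℕ) :
    PowerSeries.coeff n ((1 - PowerSeries.X ^ 2) * (Dser x)⁻¹ ^ 2) =
      ((n : ℝ) + 1) * chebU x n := by
  rw [← deriv_key x, PowerSeries.coeff_derivative, PowerSeries.coeff_succ_X_mul]
  rw [chebU]; ring
end
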